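/- Let G be a finite additive abelian group and Σ=(Γ=(V,E),σ) a signed graph with an orientation ω compatible with σ. Define the difference operator δ: G^V → G^E by (δg)(e) := ω(v,e)·g(v) + ω(u,e)·g(u) for each edge e=uv (for a loop e at v, the two half-edge terms are both at v). Then δ is a group homomorphism under pointwise addition, its image is contained in the group of G-tensions of Σ, and its kernel is isomorphic to G^{k_b(Σ)} × (G₂)^{k_u(Σ)}, where G₂ = {x ∈ G : 2x = 0}. -/

import Mathlib

attribute [local instance] Classical.propDecidable

noncomputable section SignedGraphs

/-- A signed graph: a multigraph with ordered pairs of endpoints (the order is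
an artefact of the encoding) together with a sign `±1` on each edge. -/
structure SGraph (V : Type*) (E : Type*) where
  ends : E → V × V
  sign : E → ℤˣ

namespace SGraph

variable {V E : Type*}

/-- Endpoint of `e` on side `b`; a loop has both endpoints equal, but its two
half-edges are distinguished by the side `b`. -/
def endpt (Γ : SGraph V E) (e : E) (b : Bool) : V :=
  cond b (Γ.ends e).1 (Γ.ends e).2

/-- `e` is a loop of the underlying graph. -/
def IsLoop (Γ : SGraph V E) (e : E) : Prop := (Γ.ends e).1 = (Γ.ends e).2

/-- Walks in a signed multigraph: a step traverses an edge `e` in direction `d`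
(from the side-`d` endpoint to the other endpoint). -/
inductive Walk (Γ : SGraph V E) : V → V → Type _
  | nil (v : V) : Walk Γ v v
  | cons (e : E) (d : Bool) {w : V} (p : Walk Γ (Γ.endpt e (!d)) w) : Walk Γ (Γ.endpt e d) w

namespace Walk

variable {Γ : SGraph V E}

/-- The list of vertices visited by a walk (including the final one). -/
def verts : ∀ {u v : V}, Γ.Walk u v → List V
  | _, _, .nil x => [x]
  | _, _, .cons e d p => Γ.endpt e d :: p.verts

/-- The list of edges traversed by a walk. -/
def edges : ∀ {u v : V}, Γ.Walk u v → List E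
  | _, _, .nil _ => []
  | _, _, .cons e _ p => e :: p.edges

/-- The list of (edge, direction) steps of a walk. -/
def steps : ∀ {u v : V}, Γ.Walk u v → List (E × Bool)
  | _, _, .nil _ => []
  | _, _, .cons e d p => (e, d) :: p.steps

/-- The sources of the steps of a walk, i.e. all visited vertices except the last. -/
def srcs {u v : V} (W : Γ.Walk u v) : List V := W.verts.dropLast

/-- The sign of a walk: the product of the signs of its edges. -/
def sgn : ∀ {u v : V}, Γ.Walk u v → ℤˣ
  | _, _, .nil _ => 1
  | _, _, .cons e _ p => Γ.sign e * p.sgn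

/-- Concatenation of walks. -/
def append : ∀ {u v w : V}, Γ.Walk u v → Γ.Walk v w → Γ.Walk u w
  | _, _, _, .nil _, q => q
  | _, _, _, .cons e d p, q => .cons e d (p.append q)

/-- The sum `Σᵢ f(eᵢ)` of the values of `f` on the edges of the walk,
with multiplicity. -/
def edgeSum {G : Type*} [AddCommGroup G] (f : E → G) {u v : V} (W : Γ.Walk u v) : G :=
  (W.edges.map f).sum

/-- The sum `Σᵢ ω(vᵢ,eᵢ)·(Π_{j<i} σ(eⱼ))·f(eᵢ)` along a walk, where `ω(vᵢ,eᵢ)`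
is the value of `ω` on the half-edge by which the walk leaves `vᵢ`. -/
def tensionSum {G : Type*} [AddCommGroup G] (ω : E → Bool → ℤˣ) (f : E → G) :
    ∀ {u v : V}, Γ.Walk u v → G
  | _, _, .nil _ => 0
  | _, _, .cons e d p => ((ω e d : ℤ) • f e) + ((Γ.sign e : ℤ) • tensionSum ω f p)

/-- `Q` is the reverse of the walk `P`. -/
def IsReverseOf {u v : V} (Q : Γ.Walk v u) (P : Γ.Walk u v) : Prop :=
  Q.steps = P.steps.reverse.map fun s => (s.1, !s.2)

end Walk

/-- A closed walk is a cycle if it is nontrivial, visits no vertex twice and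
uses no edge twice. -/
def IsCycle (Γ : SGraph V E) {v : V} (W : Γ.Walk v v) : Prop :=
  W.edges ≠ [] ∧ W.srcs.Nodup ∧ W.edges.Nodup

/-- A balanced (positive) cycle. -/
def IsBalancedCycle (Γ : SGraph V E) {v : V} (W : Γ.Walk v v) : Prop :=
  Γ.IsCycle W ∧ W.sgn = 1

/-- An unbalanced (negative) cycle. -/
def IsUnbalancedCycle (Γ : SGraph V E) {v : V} (W : Γ.Walk v v) : Prop :=
  Γ.IsCycle W ∧ W.sgn = -1

/-- A nontrivial walk that is a simple path (all visited vertices distinct). -/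
def IsPathWalk (Γ : SGraph V E) {u v : V} (P : Γ.Walk u v) : Prop :=
  P.edges ≠ [] ∧ P.verts.Nodup

/-- A tight handcuff at `v`: two edge-disjoint unbalanced cycles sharing exactly
the vertex `v`. -/
def IsTightHandcuff (Γ : SGraph V E) {v : V} (C₁ C₂ : Γ.Walk v v) : Prop :=
  Γ.IsUnbalancedCycle C₁ ∧ Γ.IsUnbalancedCycle C₂ ∧
    (∀ x ∈ C₁.srcs, x ∈ C₂.srcs → x = v) ∧ ∀ e ∈ C₁.edges, e ∉ C₂.edges

/-- A loose handcuff: two vertex-disjoint unbalanced cycles `C₁` (at `u`) and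
`C₂` (at `w`) joined by a simple path `P` from `u` to `w` meeting the cycles
exactly in its endpoints. -/
def IsLooseHandcuff (Γ : SGraph V E) {u w : V} (C₁ : Γ.Walk u u) (P : Γ.Walk u w)
    (C₂ : Γ.Walk w w) : Prop :=
  Γ.IsUnbalancedCycle C₁ ∧ Γ.IsUnbalancedCycle C₂ ∧ Γ.IsPathWalk P ∧
    (∀ x ∈ C₁.srcs, x ∉ C₂.srcs) ∧
    (∀ x ∈ P.verts, x ∈ C₁.srcs → x = u) ∧
    (∀ x ∈ P.verts, x ∈ C₂.srcs → x = w) ∧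
    ∀ e ∈ P.edges, e ∉ C₁.edges ∧ e ∉ C₂.edges

/-- The canonical closed walks traversing a circuit of the signed graph:
a balanced cycle, a tight handcuff `C₁ * C₂`, or a loose handcuff
`C₁ * P * C₂ * P⁻¹` (the circuit path edges being used twice). -/
def IsBasicCircuitWalk (Γ : SGraph V E) {v : V} (W : Γ.Walk v v) : Prop :=
  Γ.IsBalancedCycle W ∨
    (∃ C₁ C₂ : Γ.Walk v v, Γ.IsTightHandcuff C₁ C₂ ∧ W = C₁.append C₂) ∨
    ∃ (w : V) (C₁ : Γ.Walk v v) (P : Γ.Walk v w) (C₂ : Γ.Walk w w) (Q : Γ.Walk w v),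
      Γ.IsLooseHandcuff C₁ P C₂ ∧ Q.IsReverseOf P ∧
        W = C₁.append (P.append (C₂.append Q))

/-- A circuit walk: a rotation of a basic circuit walk. -/
def IsCircuitWalk (Γ : SGraph V E) {v : V} (W : Γ.Walk v v) : Prop :=
  ∃ (u : V) (A : Γ.Walk u v) (B : Γ.Walk v u),
    W = B.append A ∧ Γ.IsBasicCircuitWalk (A.append B)

/-- `e` is a circuit path edge: it lies on the connecting path of an unbalanced
loose handcuff. -/
def IsCircuitPathEdge (Γ : SGraph V E) (e : E) : Prop :=
  ∃ (u w : V) (C₁ : Γ.Walk u u) (P : Γ.Walk u w) (C₂ : Γ.Walk w w),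
    Γ.IsLooseHandcuff C₁ P C₂ ∧ e ∈ P.edges

/-- Adjacency via an edge. -/
def Adj (Γ : SGraph V E) (a b : V) : Prop := ∃ e, Γ.ends e = (a, b) ∨ Γ.ends e = (b, a)

/-- The set of connected components. -/
def Components (Γ : SGraph V E) : Type _ := Quot Γ.Adj

/-- The connected component of a vertex. -/
def comp (Γ : SGraph V E) (v : V) : Γ.Components := Quot.mk _ v

/-- The number `k(Γ)` of connected components. -/
def kAll (Γ : SGraph V E) : ℕ := Nat.card Γ.Components

/-- A connected component is balanced if every cycle it contains is balanced. -/
def IsBalancedComponent (Γ : SGraph V E) (c : Γ.Components) : Prop :=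
  ∀ v : V, Γ.comp v = c → ∀ W : Γ.Walk v v, Γ.IsCycle W → W.sgn = 1

/-- The number `k_b(Σ)` of balanced connected components. -/
def kb (Γ : SGraph V E) : ℕ := Nat.card {c : Γ.Components // Γ.IsBalancedComponent c}

/-- The number `k_u(Σ)` of unbalanced connected components. -/
def ku (Γ : SGraph V E) : ℕ := Nat.card {c : Γ.Components // ¬ Γ.IsBalancedComponent c}

/-- A signed graph is balanced if all its cycles are balanced. -/
def Balanced (Γ : SGraph V E) : Prop :=
  ∀ (v : V) (W : Γ.Walk v v), Γ.IsCycle W → W.sgn = 1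

/-- A signed graph is connected if it has exactly one connected component. -/
def Connected (Γ : SGraph V E) : Prop := Γ.kAll = 1

/-- The spanning subgraph `Σ \ Aᶜ` with edge set `A`. -/
def restrict (Γ : SGraph V E) (A : Set E) : SGraph V A :=
  { ends := fun e => Γ.ends e, sign := fun e => Γ.sign e }

/-- The signed Tutte polynomial (as a function of `x`, `y`, `z`):
`T_Σ(X,Y,Z) = Σ_{A⊆E} (X−1)^{k(Σ\Aᶜ)−k(Σ)} (Y−1)^{|A|−|V|+k_b(Σ\Aᶜ)} (Z−1)^{k_u(Σ\Aᶜ)}`. -/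
def signedTutte {K : Type*} [CommRing K] (Γ : SGraph V E) (x y z : K) : K :=
  ∑ᶠ A : Finset E,
    (x - 1) ^ ((Γ.restrict (A : Set E)).kAll - Γ.kAll) *
      (y - 1) ^ ((A.card + (Γ.restrict (A : Set E)).kb) - Nat.card V) *
        (z - 1) ^ (Γ.restrict (A : Set E)).ku

/-- Deletion of an edge. -/
def deleteEdge (Γ : SGraph V E) (e : E) : SGraph V {e' : E // e' ≠ e} :=
  { ends := fun e' => Γ.ends e'.1, sign := fun e' => Γ.sign e'.1 }

/-- The relation identifying the two endpoints of `e`. -/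
def contractRel (Γ : SGraph V E) (e : E) (a b : V) : Prop := (a, b) = Γ.ends e

/-- Contraction of an edge: the two endpoints are identified and the edge is
deleted.  (For a loop this is just deletion, as the identification is trivial.) -/
def contract (Γ : SGraph V E) (e : E) : SGraph (Quot (Γ.contractRel e)) {e' : E // e' ≠ e} :=
  { ends := fun e' => (Quot.mk _ (Γ.ends e'.1).1, Quot.mk _ (Γ.ends e'.1).2),
    sign := fun e' => Γ.sign e'.1 }

/-- `e` is a bridge: its deletion increases the number of connected components. -/
def IsBridge (Γ : SGraph V E) (e : E) : Prop := Γ.kAll < (Γ.deleteEdge e).kAll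

/-- An orientation of the half-edges, compatible with the signature. -/
def IsCompatible (Γ : SGraph V E) (ω : E → Bool → ℤˣ) : Prop :=
  ∀ e, Γ.sign e = -(ω e true * ω e false)

/-- A `G`-flow: Kirchhoff's law holds at every vertex. -/
def IsFlow (Γ : SGraph V E) (ω : E → Bool → ℤˣ) {G : Type*} [AddCommGroup G]
    (f : E → G) : Prop :=
  ∀ v : V,
    (∑ᶠ e : E, ((if Γ.endpt e true = v then (ω e true : ℤ) • f e else 0) +
      (if Γ.endpt e false = v then (ω e false : ℤ) • f e else 0))) = 0

/-- A `G`-tension: the alternating sum along every circuit walk vanishes. -/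
def IsTension (Γ : SGraph V E) (ω : E → Bool → ℤˣ) {G : Type*} [AddCommGroup G]
    (f : E → G) : Prop :=
  ∀ (v : V) (W : Γ.Walk v v), Γ.IsCircuitWalk W → W.tensionSum ω f = 0

end SGraph

/-- The doubling homomorphism `x ↦ x + x = 2x` of an abelian group. -/
def doubleHom (G : Type*) [AddCommGroup G] : G →+ G :=
  AddMonoidHom.mk' (fun x => x + x) (fun a b => add_add_add_comm a b a b)

/-- The subgroup `2G = {2x : x ∈ G}`. -/
def twoG (G : Type*) [AddCommGroup G] : AddSubgroup G := (doubleHom G).range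

/-- The `2`-torsion subgroup `G₂ = {x ∈ G : 2x = 0}`. -/
def torsion2 (G : Type*) [AddCommGroup G] : AddSubgroup G := (doubleHom G).ker

namespace SGraph

variable {V E : Type*}

/-- A `G`-potential difference: a `G`-tension whose sum around every unbalanced
cycle lies in `2G`. -/
def IsPotentialDifference (Γ : SGraph V E) (ω : E → Bool → ℤˣ) {G : Type*} [AddCommGroup G]
    (f : E → G) : Prop :=
  Γ.IsTension ω f ∧
    ∀ (v : V) (W : Γ.Walk v v), Γ.IsUnbalancedCycle W → W.edgeSum f ∈ twoG G

end SGraph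

namespace SGraph

variable {V E : Type*}

/-- Proper coloring by elements of a set `X` with involution `ι`: adjacent
endpoints of a positive edge get different colors, and for a negative edge the
`ι`-image of one endpoint's color differs from the other endpoint's color. -/
def IsProperInvColoring (Γ : SGraph V E) {X : Type*} (ι : X → X) (f : V → X) : Prop :=
  ∀ e : E, (Γ.sign e = 1 → f ((Γ.ends e).1) ≠ f ((Γ.ends e).2)) ∧
    (Γ.sign e = -1 → ι (f ((Γ.ends e).1)) ≠ f ((Γ.ends e).2))

/-- A proper `G`-coloring: for every edge `e = uv`, `f(u) ≠ f(v)` if `e` is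
positive and `-f(u) ≠ f(v)` if `e` is negative, i.e. `σ(e)•f(u) ≠ f(v)`. -/
def IsProperColoring (Γ : SGraph V E) {G : Type*} [AddCommGroup G] (f : V → G) : Prop :=
  ∀ e : E, ((Γ.sign e : ℤ) • f ((Γ.ends e).1)) ≠ f ((Γ.ends e).2)

/-- Zaslavsky's proper `n`-coloring: colors in `{0, ±1, …, ±n}` with
`f(u) ≠ σ(e)·f(v)` for every edge `e = uv`. -/
def IsProperNColoring (Γ : SGraph V E) (n : ℕ) (f : V → ℤ) : Prop :=
  (∀ v, |f v| ≤ (n : ℤ)) ∧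
    ∀ e : E, f ((Γ.ends e).1) ≠ (Γ.sign e : ℤ) * f ((Γ.ends e).2)

/-- `T ⊆ E` is a spanning tree: the spanning subgraph `(V,T)` is connected and
contains no cycle. -/
def IsSpanningTree (Γ : SGraph V E) (T : Set E) : Prop :=
  (Γ.restrict T).Connected ∧
    ∀ (v : V) (W : (Γ.restrict T).Walk v v), ¬ (Γ.restrict T).IsCycle W

/-- A connected basis of a connected signed graph: a spanning tree if `Σ` is
balanced; otherwise a spanning tree plus one extra edge closing an unbalanced
cycle. -/
def IsConnectedBasis (Γ : SGraph V E) (B : Set E) : Prop :=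
  (Γ.Balanced ∧ Γ.IsSpanningTree B) ∨
    (¬ Γ.Balanced ∧ ∃ (T : Set E) (e : E), Γ.IsSpanningTree T ∧ e ∉ T ∧ B = insert e T ∧
      ∀ (v : V) (W : (Γ.restrict B).Walk v v), (Γ.restrict B).IsCycle W → W.sgn = -1)

/-- Switching at a vertex `v`: the sign of every non-loop edge incident with `v`
is negated; loops keep their sign. -/
def switchAt (Γ : SGraph V E) (v : V) : SGraph V E :=
  { ends := Γ.ends,
    sign := fun e => if ((Γ.ends e).1 = v ↔ (Γ.ends e).2 = v) then Γ.sign e else -Γ.sign e }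

/-- Switching at a set `S` of vertices (the composite of the switchings at the
vertices of `S`): the sign of an edge is negated iff exactly one of its
endpoints lies in `S`. -/
def switchSet (Γ : SGraph V E) (S : Set V) : SGraph V E :=
  { ends := Γ.ends,
    sign := fun e => if ((Γ.ends e).1 ∈ S ↔ (Γ.ends e).2 ∈ S) then Γ.sign e else -Γ.sign e }

/-- Isomorphism of signed graphs (as undirected signed multigraphs). -/
def Iso {V₁ E₁ V₂ E₂ : Type*} (Γ₁ : SGraph V₁ E₁) (Γ₂ : SGraph V₂ E₂) : Prop :=
  ∃ (φ : V₁ ≃ V₂) (ψ : E₁ ≃ E₂), ∀ e : E₁,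
    (Γ₂.ends (ψ e) = (φ (Γ₁.ends e).1, φ (Γ₁.ends e).2) ∨
      Γ₂.ends (ψ e) = (φ (Γ₁.ends e).2, φ (Γ₁.ends e).1)) ∧
    Γ₂.sign (ψ e) = Γ₁.sign e

/-- Switching equivalence: isomorphism after switching at a set of vertices. -/
def SwitchEquiv {V₁ E₁ V₂ E₂ : Type*} (Γ₁ : SGraph V₁ E₁) (Γ₂ : SGraph V₂ E₂) : Prop :=
  ∃ S : Set V₁, Iso (Γ₁.switchSet S) Γ₂

/-- Disjoint union of signed graphs. -/
def disjUnion {V₁ E₁ V₂ E₂ : Type*} (Γ₁ : SGraph V₁ E₁) (Γ₂ : SGraph V₂ E₂) :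
    SGraph (V₁ ⊕ V₂) (E₁ ⊕ E₂) where
  ends := fun e => match e with
    | .inl e => (Sum.inl (Γ₁.ends e).1, Sum.inl (Γ₁.ends e).2)
    | .inr e => (Sum.inr (Γ₂.ends e).1, Sum.inr (Γ₂.ends e).2)
  sign := fun e => match e with
    | .inl e => Γ₁.sign e
    | .inr e => Γ₂.sign e

/-- The difference operator `δ : G^V → G^E`,
`(δg)(e) = ω(v,e)·g(v) + ω(u,e)·g(u)` for `e = uv`. -/
def deltaHom (Γ : SGraph V E) (ω : E → Bool → ℤˣ) (G : Type*) [AddCommGroup G] :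
    (V → G) →+ (E → G) :=
  AddMonoidHom.mk'
    (fun g e => (ω e true : ℤ) • g ((Γ.ends e).1) + (ω e false : ℤ) • g ((Γ.ends e).2))
    (by
      intro a b
      funext e
      simp only [Pi.add_apply, smul_add]
      abel)

end SGraph

end SignedGraphs


section Aux

namespace SGraph

variable {V E : Type*} {Γ : SGraph V E}

/-! ### Basic list helpers -/

private lemma dropLast_cons' {α : Type*} (a : α) (m : List α) (h : m ≠ []) :
    (a :: m).dropLast = a :: m.dropLast := by
  cases m with
  | nil => exact absurd rfl h
  | cons b t => rfl

private lemma dropLast_append' {α : Type*} (l₁ l₂ : List α) (h : l₂ ≠ []) :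
    (l₁ ++ l₂).dropLast = l₁ ++ l₂.dropLast := by
  induction l₁ with
  | nil => rfl
  | cons a t ih =>
    have ht : t ++ l₂ ≠ [] := by
      intro hc
      rcases List.append_eq_nil_iff.mp hc with ⟨-, h2⟩
      exact h h2
    simp only [List.cons_append, dropLast_cons' _ _ ht, ih]

private lemma exists_dup_split {α : Type*} {l : List α} (h : ¬ l.Nodup) :
    ∃ (a : α) (l₁ l₂ l₃ : List α), l = l₁ ++ a :: (l₂ ++ a :: l₃) := by
  induction l with
  | nil => exact absurd List.nodup_nil h
  | cons x t ih =>
    by_cases hx : x ∈ t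
    · obtain ⟨s, r, rfl⟩ := List.append_of_mem hx
      exact ⟨x, [], s, r, by simp⟩
    · have hnt : ¬ t.Nodup := fun hn => h (List.nodup_cons.mpr ⟨hx, hn⟩)
      obtain ⟨a, l₁, l₂, l₃, rfl⟩ := ih hnt
      exact ⟨a, x :: l₁, l₂, l₃, by simp⟩

private lemma units_ne : (1 : ℤˣ) ≠ -1 := by
  intro h
  have := congrArg (Units.val) h
  norm_num at this

private lemma unit_smul_cancel {G : Type*} [AddCommGroup G] (a : ℤˣ) (x : G) :
    (a : ℤ) • (a : ℤ) • x = x := by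
  rw [smul_smul, ← Units.val_mul, Int.units_mul_self, Units.val_one, one_smul]

namespace Walk

/-! ### Basic walk lemmas -/

@[simp] lemma edges_nil {v : V} : (Walk.nil (Γ := Γ) v).edges = [] := rfl

@[simp] lemma edges_cons (e : E) (d : Bool) {w : V} (p : Γ.Walk (Γ.endpt e (!d)) w) :
    (Walk.cons e d p).edges = e :: p.edges := rfl

@[simp] lemma verts_nil {v : V} : (Walk.nil (Γ := Γ) v).verts = [v] := rfl

@[simp] lemma verts_cons (e : E) (d : Bool) {w : V} (p : Γ.Walk (Γ.endpt e (!d)) w) :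
    (Walk.cons e d p).verts = Γ.endpt e d :: p.verts := rfl

@[simp] lemma sgn_nil {v : V} : (Walk.nil (Γ := Γ) v).sgn = 1 := rfl

@[simp] lemma sgn_cons (e : E) (d : Bool) {w : V} (p : Γ.Walk (Γ.endpt e (!d)) w) :
    (Walk.cons e d p).sgn = Γ.sign e * p.sgn := rfl

@[simp] lemma steps_nil {v : V} : (Walk.nil (Γ := Γ) v).steps = [] := rfl

@[simp] lemma steps_cons (e : E) (d : Bool) {w : V} (p : Γ.Walk (Γ.endpt e (!d)) w) :
    (Walk.cons e d p).steps = (e, d) :: p.steps := rfl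

lemma exists_verts_cons : ∀ {u v : V} (W : Γ.Walk u v), ∃ t, W.verts = u :: t := by
  intro u v W
  cases W with
  | nil => exact ⟨[], rfl⟩
  | cons e d p => exact ⟨p.verts, rfl⟩

lemma verts_ne_nil {u v : V} (W : Γ.Walk u v) : W.verts ≠ [] := by
  obtain ⟨t, ht⟩ := exists_verts_cons W
  simp [ht]

@[simp] lemma srcs_nil {v : V} : (Walk.nil (Γ := Γ) v).srcs = [] := rfl

@[simp] lemma srcs_cons (e : E) (d : Bool) {w : V} (p : Γ.Walk (Γ.endpt e (!d)) w) :
    (Walk.cons e d p).srcs = Γ.endpt e d :: p.srcs := by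
  simp only [srcs, verts_cons]
  exact dropLast_cons' _ _ (verts_ne_nil p)

@[simp] lemma nil_append {v w : V} (q : Γ.Walk v w) : (Walk.nil v).append q = q := rfl

@[simp] lemma cons_append (e : E) (d : Bool) {x w : V} (p : Γ.Walk (Γ.endpt e (!d)) x)
    (q : Γ.Walk x w) : (Walk.cons e d p).append q = Walk.cons e d (p.append q) := rfl

lemma edges_append {u v w : V} (p : Γ.Walk u v) (q : Γ.Walk v w) :
    (p.append q).edges = p.edges ++ q.edges := by
  induction p with
  | nil => simp
  | cons e d p ih => simp [ih]

lemma sgn_append {u v w : V} (p : Γ.Walk u v) (q : Γ.Walk v w) :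
    (p.append q).sgn = p.sgn * q.sgn := by
  induction p with
  | nil => simp
  | cons e d p ih => simp [ih, mul_assoc]

lemma verts_append {u v w : V} (p : Γ.Walk u v) (q : Γ.Walk v w) :
    (p.append q).verts = p.srcs ++ q.verts := by
  induction p with
  | nil => simp
  | cons e d p ih => simp [ih]

lemma srcs_append {u v w : V} (p : Γ.Walk u v) (q : Γ.Walk v w) :
    (p.append q).srcs = p.srcs ++ q.srcs := by
  simp only [srcs, verts_append p q]
  exact dropLast_append' _ _ (verts_ne_nil q)

lemma length_srcs {u v : V} (W : Γ.Walk u v) : W.srcs.length = W.edges.length := by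
  induction W with
  | nil => simp
  | cons e d p ih => simp [ih]

lemma sgn_eq_prod {u v : V} (W : Γ.Walk u v) : W.sgn = (W.edges.map Γ.sign).prod := by
  induction W with
  | nil => simp
  | cons e d p ih => simp [ih]

lemma edges_eq_steps_map {u v : V} (W : Γ.Walk u v) : W.edges = W.steps.map Prod.fst := by
  induction W with
  | nil => simp
  | cons e d p ih => simp [ih]

lemma eq_of_edges_eq_nil : ∀ {u v : V} (W : Γ.Walk u v), W.edges = [] → u = v := by
  intro u v W h
  cases W with
  | nil => rfl
  | cons e d p => simp at h

lemma sgn_eq_one_of_edges_eq_nil {u v : V} (W : Γ.Walk u v) (h : W.edges = []) :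
    W.sgn = 1 := by
  rw [sgn_eq_prod, h]; rfl

lemma srcs_head : ∀ {u v : V} (W : Γ.Walk u v), W.srcs = [] ∨ ∃ t, W.srcs = u :: t := by
  intro u v W
  cases W with
  | nil => exact Or.inl rfl
  | cons e d p => exact Or.inr ⟨p.srcs, srcs_cons e d p⟩

lemma edges_eq_nil_of_srcs_eq_nil {u v : V} (W : Γ.Walk u v) (h : W.srcs = []) :
    W.edges = [] := by
  have := length_srcs W
  rw [h] at this
  exact List.length_eq_zero_iff.mp this.symm

end Walk

/-! ### Auxiliary walks -/

/-- Traversal of a single edge, forwards. -/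
def stepWalk (Γ : SGraph V E) (e : E) : Γ.Walk (Γ.ends e).1 (Γ.ends e).2 :=
  Walk.cons e true (Walk.nil _)

/-- Traversal of a single edge, backwards from side `d`. -/
def backStep (Γ : SGraph V E) (e : E) : (d : Bool) → Γ.Walk (Γ.endpt e (!d)) (Γ.endpt e d)
  | true => Walk.cons e false (Walk.nil _)
  | false => Walk.cons e true (Walk.nil _)

@[simp] lemma sgn_stepWalk (e : E) : (Γ.stepWalk e).sgn = Γ.sign e := by
  simp [stepWalk]
  exact mul_one _

@[simp] lemma sgn_backStep (e : E) (d : Bool) : (Γ.backStep e d).sgn = Γ.sign e := by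
  cases d <;> simp [backStep]

/-- Casting the initial vertex of a walk along an equality. -/
def castWalk {u u' v : V} (h : u = u') (W : Γ.Walk u v) : Γ.Walk u' v := h ▸ W

@[simp] lemma sgn_castWalk {u u' v : V} (h : u = u') (W : Γ.Walk u v) :
    (castWalk h W).sgn = W.sgn := by subst h; rfl

lemma exists_reverse : ∀ {u v : V} (W : Γ.Walk u v), ∃ W' : Γ.Walk v u, W'.sgn = W.sgn := by
  intro u v W
  induction W with
  | nil => exact ⟨Walk.nil _, rfl⟩
  | cons e d p ih =>
    obtain ⟨p', hp⟩ := ih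
    exact ⟨p'.append (Γ.backStep e d), by
      simp [Walk.sgn_append, hp, mul_comm]⟩

/-! ### Components and walks -/

lemma comp_ends (e : E) : Γ.comp (Γ.ends e).1 = Γ.comp (Γ.ends e).2 :=
  Quot.sound ⟨e, Or.inl Prod.mk.eta.symm⟩

lemma comp_eq_of_walk : ∀ {u v : V}, Γ.Walk u v → Γ.comp u = Γ.comp v := by
  intro u v W
  induction W with
  | nil => rfl
  | cons e d p ih =>
    refine Eq.trans ?_ ih
    cases d
    · exact (comp_ends e).symm
    · exact comp_ends e

lemma comp_eq_of_mem_srcs : ∀ {u v x : V} (W : Γ.Walk u v), x ∈ W.srcs →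
    Γ.comp x = Γ.comp u := by
  intro u v x W
  induction W with
  | nil => simp
  | cons e d p ih =>
    rw [Walk.srcs_cons]
    intro hx
    rcases List.mem_cons.mp hx with rfl | hx
    · rfl
    · exact (ih hx).trans (comp_eq_of_walk (Γ.backStep e d))

lemma walk_of_comp_eq {u v : V} (h : Γ.comp u = Γ.comp v) : Nonempty (Γ.Walk u v) := by
  have h' : Relation.EqvGen Γ.Adj u v := Quot.eq.mp h
  clear h
  induction h' with
  | rel a b hab =>
    obtain ⟨e, he | he⟩ := hab
    · have ha : a = (Γ.ends e).1 := by rw [he]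
      have hb : b = (Γ.ends e).2 := by rw [he]
      subst ha; subst hb
      exact ⟨Γ.stepWalk e⟩
    · have ha : a = (Γ.ends e).2 := by rw [he]
      have hb : b = (Γ.ends e).1 := by rw [he]
      subst ha; subst hb
      exact ⟨Walk.cons e false (Walk.nil _)⟩
  | refl a => exact ⟨Walk.nil a⟩
  | symm a b _ ih =>
    obtain ⟨W⟩ := ih
    obtain ⟨W', -⟩ := exists_reverse W
    exact ⟨W'⟩
  | trans a b c _ _ ih₁ ih₂ => exact ⟨ih₁.some.append ih₂.some⟩

end SGraph

end Aux


section Aux2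

namespace SGraph

variable {V E : Type*} {Γ : SGraph V E}

open Walk

lemma split_at_src : ∀ {u v : V} (W : Γ.Walk u v) (l₁ l₂ : List V) (w : V),
    W.srcs = l₁ ++ w :: l₂ → ∃ (A : Γ.Walk u w) (B : Γ.Walk w v),
      W = A.append B ∧ A.srcs = l₁ ∧ B.srcs = w :: l₂ := by
  intro u v W
  induction W with
  | nil => intro l₁ l₂ w h; simp at h
  | cons e d p ih =>
    intro l₁ l₂ w h
    rw [srcs_cons] at h
    cases l₁ with
    | nil =>
      simp only [List.nil_append] at h
      injection h with hw hl
      subst hw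
      exact ⟨Walk.nil _, Walk.cons e d p, rfl, rfl, by rw [srcs_cons, hl]⟩
    | cons x t =>
      simp only [List.cons_append] at h
      injection h with hx hl
      obtain ⟨A', B, hp, hA', hB⟩ := ih t l₂ w hl
      subst hx
      exact ⟨Walk.cons e d A', B, by rw [cons_append, hp], by rw [srcs_cons, hA'], hB⟩

lemma split_at_edge : ∀ {u v : V} (W : Γ.Walk u v) (L₁ L₂ : List E) (e : E),
    W.edges = L₁ ++ e :: L₂ → ∃ (d : Bool) (A : Γ.Walk u (Γ.endpt e d))
      (B : Γ.Walk (Γ.endpt e (!d)) v),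
      W = A.append (Walk.cons e d B) ∧ A.edges = L₁ ∧ B.edges = L₂ := by
  intro u v W
  induction W with
  | nil => intro L₁ L₂ e h; simp at h
  | cons e' d p ih =>
    intro L₁ L₂ e h
    rw [edges_cons] at h
    cases L₁ with
    | nil =>
      simp only [List.nil_append] at h
      injection h with he hl
      subst he
      exact ⟨d, Walk.nil _, p, rfl, rfl, hl⟩
    | cons x t =>
      simp only [List.cons_append] at h
      injection h with hx hl
      obtain ⟨d', A', B, hp, hA', hB⟩ := ih t L₂ e hl
      subst hx
      exact ⟨d', Walk.cons e' d A', B, by rw [cons_append, hp], by rw [edges_cons, hA'], hB⟩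

lemma exists_neg_cycle : ∀ (n : ℕ) (u : V) (W : Γ.Walk u u), W.edges.length ≤ n →
    W.sgn = -1 → ∃ (w : V) (C : Γ.Walk w w), Γ.IsCycle C ∧ C.sgn = -1 ∧
      Γ.comp w = Γ.comp u := by
  intro n
  induction n using Nat.strong_induction_on with
  | _ n ih =>
    intro u W hlen hsgn
    by_cases hnodup : W.srcs.Nodup
    · by_cases hedup : W.edges.Nodup
      · refine ⟨u, W, ⟨?_, hnodup, hedup⟩, hsgn, rfl⟩
        intro h0
        rw [sgn_eq_one_of_edges_eq_nil W h0] at hsgn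
        exact units_ne hsgn
      · exfalso
        obtain ⟨e, L₁, L₂, L₃, hdecomp⟩ := exists_dup_split hedup
        obtain ⟨d, A, B, hW, hA, hB⟩ := split_at_edge W L₁ (L₂ ++ e :: L₃) e hdecomp
        obtain ⟨d', A', B', hB2, hA', hB'⟩ := split_at_edge B L₂ L₃ e hB
        have hsr : W.srcs
            = A.srcs ++ Γ.endpt e d :: (A'.srcs ++ Γ.endpt e d' :: B'.srcs) := by
          rw [hW, hB2, srcs_append, srcs_cons, srcs_append, srcs_cons]
        rw [hsr] at hnodup
        obtain ⟨hAnd, hrest, hdisj⟩ := List.nodup_append'.mp hnodup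
        have hxnotmem : Γ.endpt e d ∉ (A'.srcs ++ Γ.endpt e d' :: B'.srcs) :=
          (List.nodup_cons.mp hrest).1
        have hinner : (A'.srcs ++ Γ.endpt e d' :: B'.srcs).Nodup :=
          (List.nodup_cons.mp hrest).2
        obtain ⟨hA'nd, hynd, hdisj2⟩ := List.nodup_append'.mp hinner
        have hyA' : Γ.endpt e d' ∉ A'.srcs :=
          fun hy => hdisj2 hy (List.mem_cons_self)
        have hxny : Γ.endpt e d ≠ Γ.endpt e d' := by
          intro hxy
          exact hxnotmem (by rw [hxy]; exact List.mem_append_right _ (List.mem_cons_self))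
        have hxB' : Γ.endpt e d ∉ B'.srcs :=
          fun hx => hxnotmem (List.mem_append_right _ (List.mem_cons_of_mem _ hx))
        have hxA : Γ.endpt e d ∉ A.srcs :=
          fun hx => hdisj hx (List.mem_cons_self)
        have hd' : d' = !d := by
          by_cases hdd : d' = d
          · subst hdd; exact absurd rfl hxny
          · cases d <;> cases d' <;> simp_all
        subst hd'
        have hA'srcs : A'.srcs = [] := by
          rcases srcs_head A' with h | ⟨t, ht⟩
          · exact h
          · exact absurd (by rw [ht]; exact List.mem_cons_self) hyA'
        have hB'start : Γ.endpt e (!(!d)) = Γ.endpt e d := by rw [Bool.not_not]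
        have hB'srcs : B'.srcs = [] := by
          rcases srcs_head B' with h | ⟨t, ht⟩
          · exact h
          · refine absurd ?_ hxB'
            rw [ht, hB'start]
            exact List.mem_cons_self
        have hB'edges := edges_eq_nil_of_srcs_eq_nil B' hB'srcs
        have hend : Γ.endpt e (!(!d)) = u := eq_of_edges_eq_nil B' hB'edges
        have hux : u = Γ.endpt e d := by rw [← hend, hB'start]
        have hAsrcs : A.srcs = [] := by
          rcases srcs_head A with h | ⟨t, ht⟩
          · exact h
          · refine absurd ?_ hxA
            rw [ht, ← hux]
            exact List.mem_cons_self
        have hAedges := edges_eq_nil_of_srcs_eq_nil A hAsrcs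
        have hA'edges := edges_eq_nil_of_srcs_eq_nil A' hA'srcs
        rw [hW, hB2, sgn_append, sgn_cons, sgn_append, sgn_cons,
          sgn_eq_one_of_edges_eq_nil A hAedges, sgn_eq_one_of_edges_eq_nil A' hA'edges,
          sgn_eq_one_of_edges_eq_nil B' hB'edges] at hsgn
        simp only [one_mul, mul_one] at hsgn
        rw [Int.units_mul_self] at hsgn
        exact units_ne hsgn
    · obtain ⟨w, l₁, l₂, l₃, hdecomp⟩ := exists_dup_split hnodup
      obtain ⟨A, B, hW, hA, hB⟩ := split_at_src W l₁ (l₂ ++ w :: l₃) w hdecomp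
      have hB' : B.srcs = (w :: l₂) ++ w :: l₃ := by rw [hB]; rfl
      obtain ⟨C, D, hB2, hC, hD⟩ := split_at_src B (w :: l₂) l₃ w hB'
      have hlenC : C.edges.length = l₂.length + 1 := by
        rw [← length_srcs, hC]; simp
      have hlenD : 1 ≤ D.edges.length := by
        rw [← length_srcs, hD]; simp
      have hlenW : W.edges.length
          = A.edges.length + (C.edges.length + D.edges.length) := by
        rw [hW, hB2, edges_append, edges_append]; simp
      rw [hW, hB2, sgn_append, sgn_append] at hsgn
      rcases Int.units_eq_one_or C.sgn with hCs | hCs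
      · rw [hCs, one_mul] at hsgn
        have hrec : (A.append D).sgn = -1 := by rw [sgn_append]; exact hsgn
        have hlt : (A.append D).edges.length < n := by
          rw [edges_append]
          simp only [List.length_append]
          omega
        exact ih _ hlt u (A.append D) (le_refl _) hrec
      · have hlt : C.edges.length < n := by omega
        obtain ⟨w', C', hcyc, hsgn', hcomp⟩ := ih _ hlt w C (le_refl _) hCs
        exact ⟨w', C', hcyc, hsgn', hcomp.trans (comp_eq_of_walk A).symm⟩

lemma closed_sgn_one {u : V} (hbal : Γ.IsBalancedComponent (Γ.comp u)) (W : Γ.Walk u u) :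
    W.sgn = 1 := by
  rcases Int.units_eq_one_or W.sgn with h | h
  · exact h
  · obtain ⟨w, C, hcyc, hsgn', hcomp⟩ := exists_neg_cycle W.edges.length u W (le_refl _) h
    have h1 := hbal w hcomp C hcyc
    rw [h1] at hsgn'
    exact absurd hsgn' units_ne

/-! ### Tension and kernel lemmas -/

variable {G : Type*} [AddCommGroup G] {ω : E → Bool → ℤˣ}

@[simp] lemma deltaHom_apply (g : V → G) (e : E) :
    Γ.deltaHom ω G g e
      = (ω e true : ℤ) • g (Γ.ends e).1 + (ω e false : ℤ) • g (Γ.ends e).2 := rfl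

lemma deltaHom_step (hω : Γ.IsCompatible ω) (g : V → G) (e : E) (d : Bool) :
    (ω e d : ℤ) • Γ.deltaHom ω G g e
      = g (Γ.endpt e d) - ((Γ.sign e : ℤˣ) : ℤ) • g (Γ.endpt e (!d)) := by
  have hσ := hω e
  rcases Int.units_eq_one_or (ω e true) with h1 | h1 <;>
    rcases Int.units_eq_one_or (ω e false) with h2 | h2 <;>
      cases d <;>
        simp [hσ, h1, h2, endpt, sub_eq_add_neg, add_comm]

lemma tensionSum_delta (hω : Γ.IsCompatible ω) (g : V → G) :
    ∀ {u v : V} (W : Γ.Walk u v),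
      W.tensionSum ω (Γ.deltaHom ω G g) = g u - ((W.sgn : ℤˣ) : ℤ) • g v := by
  intro u v W
  induction W with
  | nil => simp [Walk.tensionSum]
  | cons e d p ih =>
    show (ω e d : ℤ) • Γ.deltaHom ω G g e
        + ((Γ.sign e : ℤˣ) : ℤ) • p.tensionSum ω (Γ.deltaHom ω G g) = _
    rw [ih, deltaHom_step hω, sgn_cons]
    simp only [Units.val_mul, smul_sub, smul_smul]
    abel

lemma sgn_eq_of_isReverseOf {u v : V} {P : Γ.Walk u v} {Q : Γ.Walk v u}
    (h : Q.IsReverseOf P) : Q.sgn = P.sgn := by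
  have he : Q.edges = P.edges.reverse := by
    rw [edges_eq_steps_map, edges_eq_steps_map, h, List.map_map]
    rw [show (Prod.fst ∘ fun s : E × Bool => (s.1, !s.2)) = Prod.fst from rfl]
    simp [List.map_reverse]
  rw [sgn_eq_prod, sgn_eq_prod, he]
  simp [List.map_reverse, List.prod_reverse]

lemma sgn_basicCircuitWalk {v : V} {W : Γ.Walk v v} (h : Γ.IsBasicCircuitWalk W) :
    W.sgn = 1 := by
  rcases h with hb | ⟨C₁, C₂, ⟨h1, h2, -, -⟩, rfl⟩ | ⟨w, C₁, P, C₂, Q, hl, hQ, rfl⟩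
  · exact hb.2
  · rw [sgn_append, h1.2, h2.2]; simp
  · obtain ⟨hC₁, hC₂, -, -, -, -, -⟩ := hl
    have hQP : Q.sgn = P.sgn := sgn_eq_of_isReverseOf hQ
    rw [sgn_append, sgn_append, sgn_append, hC₁.2, hC₂.2, hQP]
    rcases Int.units_eq_one_or P.sgn with h | h <;> rw [h] <;> simp

lemma sgn_circuitWalk {v : V} {W : Γ.Walk v v} (h : Γ.IsCircuitWalk W) : W.sgn = 1 := by
  obtain ⟨u, A, B, rfl, hbasic⟩ := h
  have h1 := sgn_basicCircuitWalk hbasic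
  rw [sgn_append] at h1 ⊢
  rw [mul_comm]
  exact h1

lemma deltaHom_eq_zero_of (hω : Γ.IsCompatible ω) (g : V → G)
    (h : ∀ e, g (Γ.ends e).2 = ((Γ.sign e : ℤˣ) : ℤ) • g (Γ.ends e).1) :
    Γ.deltaHom ω G g = 0 := by
  funext e
  have hσ := hω e
  simp only [deltaHom_apply, Pi.zero_apply, h e, hσ]
  rcases Int.units_eq_one_or (ω e true) with h1 | h1 <;>
    rcases Int.units_eq_one_or (ω e false) with h2 | h2 <;>
      simp [h1, h2, smul_smul]

lemma eq_smul_of_deltaHom_eq_zero (hω : Γ.IsCompatible ω) (g : V → G)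
    (h : Γ.deltaHom ω G g = 0) :
    ∀ e, g (Γ.ends e).2 = ((Γ.sign e : ℤˣ) : ℤ) • g (Γ.ends e).1 := by
  intro e
  have he : (ω e true : ℤ) • g (Γ.ends e).1 + (ω e false : ℤ) • g (Γ.ends e).2 = 0 := by
    have h0 := congrFun h e
    simpa [deltaHom_apply] using h0
  have hσ := hω e
  rcases Int.units_eq_one_or (ω e true) with h1 | h1 <;>
    rcases Int.units_eq_one_or (ω e false) with h2 | h2 <;>
      rw [h1, h2] at he <;> rw [hσ, h1, h2] <;>
        simp only [Units.val_neg, Units.val_mul, Units.val_one, one_smul, neg_smul,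
          one_mul, mul_one, neg_neg, neg_mul_neg] at he ⊢
  · exact eq_neg_of_add_eq_zero_right he
  · exact (add_neg_eq_zero.mp he).symm
  · exact (neg_add_eq_zero.mp he).symm
  · have h3 : g (Γ.ends e).2 + g (Γ.ends e).1 = 0 := by
      have h4 := congrArg Neg.neg he
      simpa [neg_add] using h4
    exact eq_neg_of_add_eq_zero_left h3

lemma transport {g : V → G}
    (hg : ∀ e, g (Γ.ends e).2 = ((Γ.sign e : ℤˣ) : ℤ) • g (Γ.ends e).1) :
    ∀ {u v : V} (W : Γ.Walk u v), g v = ((W.sgn : ℤˣ) : ℤ) • g u := by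
  intro u v W
  induction W with
  | nil => simp
  | cons e d p ih =>
    have hstep : g (Γ.endpt e (!d)) = ((Γ.sign e : ℤˣ) : ℤ) • g (Γ.endpt e d) := by
      cases d
      · show g (Γ.ends e).1 = ((Γ.sign e : ℤˣ) : ℤ) • g (Γ.ends e).2
        rw [hg e, unit_smul_cancel]
      · exact hg e
    rw [sgn_cons, ih, hstep, smul_smul, ← Units.val_mul, mul_comm p.sgn (Γ.sign e)]

lemma mem_torsion2_iff {G : Type*} [AddCommGroup G] (x : G) :
    x ∈ torsion2 G ↔ x + x = 0 := by
  simp [torsion2, AddMonoidHom.mem_ker, doubleHom]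

end SGraph

end Aux2

section Statement

open SGraph

/-- Theorem 7.13: the difference operator `δ : G^V → G^E` is a group
homomorphism whose image consists of `G`-tensions, and whose kernel is
isomorphic to `G^{k_b(Σ)} × G₂^{k_u(Σ)}`, where `G₂ = {x ∈ G : 2x = 0}`. -/
theorem deltaHom_image_tensions_and_kernel (V E : Type) [Finite V] [Finite E]
    (Γ : SGraph V E) (ω : E → Bool → ℤˣ) (hω : Γ.IsCompatible ω)
    (G : Type) [AddCommGroup G] [Finite G] :
    -- δ is a group homomorphism
    (∀ g h : V → G, Γ.deltaHom ω G (g + h) = Γ.deltaHom ω G g + Γ.deltaHom ω G h) ∧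
    -- its image is contained in the group of G-tensions
    (∀ g : V → G, Γ.IsTension ω (Γ.deltaHom ω G g)) ∧
    -- its kernel is isomorphic to G^{k_b} × G₂^{k_u}
    Nonempty ((Γ.deltaHom ω G).ker ≃+ ((Fin Γ.kb → G) × (Fin Γ.ku → torsion2 G))) := by
  classical
  refine ⟨fun g h => map_add _ g h, ?_, ?_⟩
  · -- the image consists of tensions
    intro g v W hW
    rw [tensionSum_delta hω g W, sgn_circuitWalk hW]
    simp
  · -- the kernel
    haveI : Finite Γ.Components :=
      Finite.of_surjective (Quot.mk Γ.Adj) (fun c => Quot.exists_rep c)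
    have hrepex : ∀ c : Γ.Components, ∃ v : V, Γ.comp v = c := fun c => Quot.exists_rep c
    choose rep hrep using hrepex
    -- the values of a kernel element on representatives of unbalanced components
    -- are 2-torsion
    have htor : ∀ (g : V → G), Γ.deltaHom ω G g = 0 → ∀ (c : Γ.Components),
        ¬ Γ.IsBalancedComponent c → g (rep c) + g (rep c) = 0 := by
      intro g hg c hb
      have hedge := eq_smul_of_deltaHom_eq_zero hω g hg
      simp only [IsBalancedComponent] at hb
      push_neg at hb
      obtain ⟨x, hx, W, hcyc, hne⟩ := hb
      have hWs : W.sgn = -1 := (Int.units_eq_one_or W.sgn).resolve_left hne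
      have hxx : g x + g x = 0 := by
        have h1 : g x = ((W.sgn : ℤˣ) : ℤ) • g x := transport hedge W
        rw [hWs] at h1
        simp only [Units.val_neg, Units.val_one, neg_smul, one_smul] at h1
        exact add_eq_zero_iff_eq_neg.mpr h1
      obtain ⟨U⟩ := Γ.walk_of_comp_eq (show Γ.comp x = Γ.comp (rep c) by rw [hx, hrep c])
      have h2 : g (rep c) = ((U.sgn : ℤˣ) : ℤ) • g x := transport hedge U
      rw [h2, ← smul_add, hxx, smul_zero]
    -- the comparison homomorphism
    let Φ : (Γ.deltaHom ω G).ker →+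
        (({c : Γ.Components // Γ.IsBalancedComponent c} → G) ×
          ({c : Γ.Components // ¬ Γ.IsBalancedComponent c} → torsion2 G)) :=
      AddMonoidHom.mk'
        (fun g => (fun c => g.1 (rep c.1),
          fun c => ⟨g.1 (rep c.1), (mem_torsion2_iff _).mpr
            (htor g.1 (AddMonoidHom.mem_ker.mp g.2) c.1 c.2)⟩))
        (by
          intro a b
          refine Prod.ext ?_ ?_ <;> funext c
          · simp
          · apply Subtype.ext
            simp)
    have hinj : Function.Injective Φ := by
      refine (injective_iff_map_eq_zero Φ).mpr ?_
      intro g hg0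
      have hreps : ∀ c : Γ.Components, g.1 (rep c) = 0 := by
        intro c
        by_cases hb : Γ.IsBalancedComponent c
        · have h1 := congrFun (congrArg Prod.fst hg0) ⟨c, hb⟩
          simpa [Φ] using h1
        · have h1 := congrFun (congrArg Prod.snd hg0) ⟨c, hb⟩
          rw [Subtype.ext_iff] at h1
          simpa [Φ] using h1
      have hedge := eq_smul_of_deltaHom_eq_zero hω g.1 (AddMonoidHom.mem_ker.mp g.2)
      apply Subtype.ext
      funext v
      obtain ⟨W⟩ := Γ.walk_of_comp_eq (hrep (Γ.comp v))
      have h1 : g.1 v = ((W.sgn : ℤˣ) : ℤ) • g.1 (rep (Γ.comp v)) := transport hedge W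
      rw [hreps (Γ.comp v), smul_zero] at h1
      simpa using h1
    have hsurj : Function.Surjective Φ := by
      rintro ⟨h₁, h₂⟩
      set h : Γ.Components → G := fun c =>
        if hb : Γ.IsBalancedComponent c then h₁ ⟨c, hb⟩ else (h₂ ⟨c, hb⟩ : G) with hh
      have htors : ∀ c, ¬ Γ.IsBalancedComponent c → h c + h c = 0 := by
        intro c hb
        simp only [hh]
        rw [dif_neg hb]
        exact (mem_torsion2_iff _).mp (h₂ ⟨c, hb⟩).2
      have hWv : ∀ v : V, Nonempty (Γ.Walk (rep (Γ.comp v)) v) :=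
        fun v => Γ.walk_of_comp_eq (hrep (Γ.comp v))
      set g : V → G := fun v => (((hWv v).some.sgn : ℤˣ) : ℤ) • h (Γ.comp v) with hg
      have key : ∀ (c : Γ.Components) (T : Γ.Walk (rep c) (rep c)),
          ((T.sgn : ℤˣ) : ℤ) • h c = h c := by
        intro c T
        rcases Int.units_eq_one_or T.sgn with hT | hT
        · rw [hT]; simp
        · by_cases hb : Γ.IsBalancedComponent c
          · have h1 : T.sgn = 1 := closed_sgn_one (by rw [hrep c]; exact hb) T
            rw [h1]; simp
          · rw [hT]
            simp only [Units.val_neg, Units.val_one, neg_smul, one_smul]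
            exact neg_eq_of_add_eq_zero_left (htors c hb)
      have gval : ∀ (v : V) (W : Γ.Walk (rep (Γ.comp v)) v),
          g v = ((W.sgn : ℤˣ) : ℤ) • h (Γ.comp v) := by
        intro v W
        obtain ⟨W', hW'⟩ := exists_reverse W
        have hT := key (Γ.comp v) ((hWv v).some.append W')
        rw [Walk.sgn_append, hW'] at hT
        simp only [hg]
        rcases Int.units_eq_one_or ((hWv v).some.sgn) with h1 | h1 <;>
          rcases Int.units_eq_one_or W.sgn with h2 | h2 <;>
            rw [h1, h2] at hT ⊢ <;>
              simp only [Units.val_neg, Units.val_mul, Units.val_one, one_mul, mul_one,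
                neg_mul, one_smul, neg_smul, neg_neg] at hT ⊢ <;>
                first | rfl | exact hT | exact hT.symm
      have hedge : ∀ e, g (Γ.ends e).2 = ((Γ.sign e : ℤˣ) : ℤ) • g (Γ.ends e).1 := by
        intro e
        have hc : Γ.comp (Γ.ends e).2 = Γ.comp (Γ.ends e).1 := (comp_ends e).symm
        have hr : rep (Γ.comp (Γ.ends e).1) = rep (Γ.comp (Γ.ends e).2) := by rw [hc]
        have h2 := gval (Γ.ends e).2
          (castWalk hr ((hWv (Γ.ends e).1).some.append (Γ.stepWalk e)))
        rw [sgn_castWalk, Walk.sgn_append, sgn_stepWalk] at h2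
        have h1 := gval (Γ.ends e).1 (hWv (Γ.ends e).1).some
        rw [h2, h1, hc, smul_smul, ← Units.val_mul,
          mul_comm (Γ.sign e) ((hWv (Γ.ends e).1).some.sgn)]
      have hker : g ∈ (Γ.deltaHom ω G).ker :=
        AddMonoidHom.mem_ker.mpr (deltaHom_eq_zero_of hω g hedge)
      refine ⟨⟨g, hker⟩, ?_⟩
      have hrepval : ∀ c : Γ.Components, g (rep c) = h c := by
        intro c
        have hr0 : rep c = rep (Γ.comp (rep c)) := by rw [hrep c]
        have h1 := gval (rep c) (castWalk hr0 (Walk.nil (rep c)))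
        rw [sgn_castWalk, Walk.sgn_nil] at h1
        rw [hrep c] at h1
        simpa using h1
      refine Prod.ext ?_ ?_ <;> funext c
      · show g (rep c.1) = h₁ c
        rw [hrepval c.1]
        simp only [hh]
        rw [dif_pos c.2]
      · apply Subtype.ext
        show g (rep c.1) = ((h₂ c : G))
        rw [hrepval c.1]
        simp only [hh]
        rw [dif_neg c.2]
    haveI : Finite {c : Γ.Components // Γ.IsBalancedComponent c} := Subtype.finite
    haveI : Finite {c : Γ.Components // ¬ Γ.IsBalancedComponent c} := Subtype.finite
    let e₁ : {c : Γ.Components // Γ.IsBalancedComponent c} ≃ Fin Γ.kb := Finite.equivFin _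
    let e₂ : {c : Γ.Components // ¬ Γ.IsBalancedComponent c} ≃ Fin Γ.ku := Finite.equivFin _
    exact ⟨(AddEquiv.ofBijective Φ ⟨hinj, hsurj⟩).trans
      (AddEquiv.prodCongr (AddEquiv.arrowCongr e₁ (AddEquiv.refl G))
        (AddEquiv.arrowCongr e₂ (AddEquiv.refl _)))⟩

end Statement
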